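/- Let p = Σ_{k=0}^{n} a_k(x,y) z^k be a homogeneous polynomial of degree n ≥ 1 with n even, and set r = n/2. Then p is odd in z (p(x,y,−z) = −p(x,y,z)) if and only if K_n(p) = 0, where K_n = Σ_{k=0}^{r} μ_k^{(n)} z^k ∂_z^k and the μ_k^{(n)} are the unique rationals satisfying Σ_{k=0}^{r} (2i−1)!/(2i−1−k)! μ_k = 0 for i = 1,…,r (with the term interpreted as 0 when k > 2i−1) and Σ_{k=0}^{r} n!/(n−k)! μ_k = 1. -/

import Mathlib

open Polynomial Finset

/-- The operator `K_n = Σ_{k=0}^{r} μ_k z^k ∂_z^k`. -/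
noncomputable def Kop (r : ℕ) (mu : ℕ → ℝ)
    (p : Polynomial (MvPolynomial (Fin 2) ℝ)) : Polynomial (MvPolynomial (Fin 2) ℝ) :=
  ∑ k ∈ Finset.range (r + 1), mu k • (Polynomial.X ^ k * Polynomial.derivative^[k] p)

/-- The linear system determining the coefficients `μ_k^{(n)}`:
`Σ_k B_{2i−1,k} μ_k = 0` for `i = 1,…,r` and `Σ_k B_{n,k} μ_k = 1`,
where `B_{ij} = i!/(i−j)!` for `i ≥ j` and `0` otherwise (descending factorial). -/
def muSystem (n r : ℕ) (mu : ℕ → ℝ) : Prop :=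
  (∀ i ∈ Finset.Icc 1 r,
      ∑ k ∈ Finset.range (r + 1), ((2 * i - 1).descFactorial k : ℝ) * mu k = 0) ∧
    ∑ k ∈ Finset.range (r + 1), (n.descFactorial k : ℝ) * mu k = 1

lemma aux_coeff_comp_neg_X {R : Type*} [CommRing R] (p : Polynomial R) (m : ℕ) :
    (p.comp (-Polynomial.X)).coeff m = (-1) ^ m * p.coeff m := by
  induction p using Polynomial.induction_on' with
  | add p q hp hq => simp [add_comp, hp, hq, mul_add]
  | monomial k a =>
    rw [monomial_comp, neg_pow, coeff_monomial]
    have h1 : ((-1 : Polynomial R)) ^ k = C ((-1 : R) ^ k) := by simp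
    rw [h1, ← mul_assoc, ← C_mul, coeff_C_mul, coeff_X_pow]
    by_cases h : k = m
    · simp [h, mul_comm]
    · simp only [if_neg (fun hmk : m = k => h hmk.symm), mul_zero]
      rw [if_neg h, mul_zero]

lemma aux_Kop_coeff (r : ℕ) (mu : ℕ → ℝ) (p : Polynomial (MvPolynomial (Fin 2) ℝ)) (m : ℕ) :
    (Kop r mu p).coeff m =
      (∑ k ∈ Finset.range (r + 1), (m.descFactorial k : ℝ) * mu k) • p.coeff m := by
  unfold Kop
  rw [finset_sum_coeff, Finset.sum_smul]
  refine Finset.sum_congr rfl fun k _ => ?_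
  rw [coeff_smul, mul_comm (Polynomial.X ^ k), coeff_mul_X_pow']
  by_cases hk : k ≤ m
  · rw [if_pos hk, coeff_iterate_derivative, Nat.sub_add_cancel hk,
      ← Nat.cast_smul_eq_nsmul ℝ, smul_smul, mul_comm]
  · rw [if_neg hk, Nat.descFactorial_eq_zero_iff_lt.2 (Nat.lt_of_not_le hk)]
    simp

/-- key nonvanishing lemma -/
lemma aux_key (r : ℕ) (mu : ℕ → ℝ)
    (h0 : ∀ i ∈ Finset.Icc 1 r,
      ∑ k ∈ Finset.range (r + 1), ((2 * i - 1).descFactorial k : ℝ) * mu k = 0)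
    (h1 : ∑ k ∈ Finset.range (r + 1), ((2 * r).descFactorial k : ℝ) * mu k = 1) :
    ∀ j ≤ r, (∑ k ∈ Finset.range (r + 1), ((2 * j).descFactorial k : ℝ) * mu k) ≠ 0 := by
  set Q : Polynomial ℝ := ∑ k ∈ Finset.range (r + 1), C (mu k) * descPochhammer ℝ k with hQ
  have hevalQ : ∀ m : ℕ, Q.eval (m : ℝ) =
      ∑ k ∈ Finset.range (r + 1), (m.descFactorial k : ℝ) * mu k := by
    intro m
    rw [hQ, eval_finset_sum]
    refine Finset.sum_congr rfl fun k _ => ?_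
    rw [eval_mul, eval_C, descPochhammer_eval_eq_descFactorial, mul_comm]
  have hQne : Q ≠ 0 := by
    intro h
    have := hevalQ (2 * r)
    rw [h, h1] at this
    simp at this
  have hdegQ : Q.natDegree ≤ r := by
    refine Polynomial.natDegree_sum_le_of_forall_le _ _ fun k hk => ?_
    refine le_trans (natDegree_C_mul_le _ _) ?_
    rw [descPochhammer_natDegree]
    exact Nat.lt_succ_iff.1 (Finset.mem_range.1 hk)
  set R' : Polynomial ℝ := ∏ i ∈ Finset.Icc 1 r, (Polynomial.X - C ((2 * i - 1 : ℕ) : ℝ)) with hR'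
  have hinj : Function.Injective (fun i : ℕ => ((2 * i - 1 : ℕ) : ℝ)) := by
    intro a b hab
    have : (2 * a - 1 : ℕ) = 2 * b - 1 := Nat.cast_injective hab
    omega
  have hdvd : R' ∣ Q := by
    refine Finset.prod_dvd_of_coprime
      ((Polynomial.pairwise_coprime_X_sub_C hinj).set_pairwise _) fun i hi => ?_
    rw [Polynomial.dvd_iff_isRoot, Polynomial.IsRoot, hevalQ]
    exact h0 i hi
  have hR'monic : R'.Monic := monic_prod_of_monic _ _ fun i _ => monic_X_sub_C _
  have hR'deg : R'.natDegree = r := by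
    rw [hR', Polynomial.natDegree_prod _ _ fun i _ => X_sub_C_ne_zero _,
      Finset.sum_congr rfl fun i _ => natDegree_X_sub_C _, Finset.sum_const, Nat.card_Icc,
      smul_eq_mul, mul_one]
    omega
  obtain ⟨s, hs⟩ := hdvd
  have hsne : s ≠ 0 := by rintro rfl; simp [hs] at hQne
  have hsdeg : s.natDegree = 0 := by
    have := Polynomial.natDegree_mul hR'monic.ne_zero hsne
    rw [← hs, hR'deg] at this
    omega
  have hsC : s = C (s.coeff 0) := Polynomial.eq_C_of_natDegree_eq_zero hsdeg
  have hc0 : s.coeff 0 ≠ 0 := by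
    intro h
    rw [h, map_zero] at hsC
    exact hsne hsC
  intro j hj hzero
  rw [← hevalQ, hs, eval_mul] at hzero
  have hR'eval : R'.eval ((2 * j : ℕ) : ℝ) ≠ 0 := by
    rw [hR', eval_prod]
    refine Finset.prod_ne_zero_iff.2 fun i hi => ?_
    simp only [eval_sub, eval_X, eval_C, sub_ne_zero]
    intro h
    have : (2 * j : ℕ) = (2 * i - 1 : ℕ) := Nat.cast_injective h
    have hi1 := (Finset.mem_Icc.1 hi).1
    omega
  have hseval : s.eval ((2 * j : ℕ) : ℝ) ≠ 0 := by
    rw [hsC]; simpa using hc0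
  exact (mul_ne_zero hR'eval hseval) hzero

theorem z_odd_iff_Kop_eq_zero_of_even_degree
    (n : ℕ) (hn : 1 ≤ n) (heven : Even n)
    (p : Polynomial (MvPolynomial (Fin 2) ℝ))
    (hdeg : p.natDegree ≤ n)
    (hhom : ∀ k ≤ n, (p.coeff k).IsHomogeneous (n - k))
    (mu : ℕ → ℝ) (hmu : muSystem n (n / 2) mu)
    (huniq : ∀ mu' : ℕ → ℝ, muSystem n (n / 2) mu' →
      ∀ k ∈ Finset.range (n / 2 + 1), mu' k = mu k) :
    p.comp (-Polynomial.X) = -p ↔ Kop (n / 2) mu p = 0 := by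
  set r := n / 2 with hr
  have hn2 : n = 2 * r := by
    obtain ⟨t, ht⟩ := heven; omega
  set c : ℕ → ℝ := fun m => ∑ k ∈ Finset.range (r + 1), (m.descFactorial k : ℝ) * mu k with hc
  have hodd : ∀ m, ¬ Even m → m ≤ n → c m = 0 := by
    intro m hm hmn
    have hm' : Odd m := Nat.not_even_iff_odd.1 hm
    obtain ⟨j, hj⟩ := hm'
    have : m = 2 * (j + 1) - 1 := by omega
    rw [hc, this]
    exact hmu.1 (j + 1) (Finset.mem_Icc.2 ⟨by omega, by omega⟩)
  have hE : ∀ j ≤ r, c (2 * j) ≠ 0 := by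
    refine aux_key r mu hmu.1 ?_
    rw [← hn2]; exact hmu.2
  have hoddiff : p.comp (-Polynomial.X) = -p ↔ ∀ m, Even m → p.coeff m = 0 := by
    rw [Polynomial.ext_iff]
    constructor
    · intro h m hm
      have := h m
      rw [aux_coeff_comp_neg_X, coeff_neg, hm.neg_one_pow, one_mul] at this
      have h2 : p.coeff m + p.coeff m = 0 := by linear_combination this
      exact add_self_eq_zero.1 h2
    · intro h m
      rw [aux_coeff_comp_neg_X, coeff_neg]
      by_cases hm : Even m
      · rw [h m hm, mul_zero, neg_zero]
      · rw [(Nat.not_even_iff_odd.1 hm).neg_one_pow, neg_one_mul]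
  have hKiff : Kop r mu p = 0 ↔ ∀ m, c m • p.coeff m = 0 := by
    rw [Polynomial.ext_iff]
    constructor
    · intro h m; have := h m; rwa [aux_Kop_coeff, coeff_zero] at this
    · intro h m; rw [aux_Kop_coeff, coeff_zero]; exact h m
  rw [hoddiff, hKiff]
  constructor
  · intro h m
    by_cases hmn : m ≤ n
    · by_cases hm : Even m
      · rw [h m hm, smul_zero]
      · rw [hodd m hm hmn, zero_smul]
    · rw [Polynomial.coeff_eq_zero_of_natDegree_lt (lt_of_le_of_lt hdeg (by omega)), smul_zero]
  · intro h m hm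
    by_cases hmn : m ≤ n
    · obtain ⟨j, hj⟩ := hm
      have hjr : j ≤ r := by omega
      have hne := hE j hjr
      rw [show 2 * j = m by omega] at hne
      have h3 := congrArg (fun q => (c m)⁻¹ • q) (h m)
      simpa [smul_smul, inv_mul_cancel₀ hne, one_smul] using h3
    · exact Polynomial.coeff_eq_zero_of_natDegree_lt (lt_of_le_of_lt hdeg (by omega))
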